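/- (Stationary point characterization in the coordinate-wise fit) Let p(x) = Σ_{n∈I₁} αₙ N(x; μₙ, Pₙ) and q(x) = Σ_{m∈I₂} βₘ N(x; mₘ, Sₘ) be finite Gaussian mixtures on ℝ^d with symmetric positive-definite covariances, fix n ∈ I₁, and let J(αₙ) = ISD(p‖q) as a function of αₙ with all other weights fixed. Then J'(αₙ) = 0 holds if and only if αₙ = (2π)^{d/2} (det(2Pₙ))^{1/2} [ Σ_{m∈I₂} βₘ N(μₙ; mₘ, Pₙ + Sₘ) − Σ_{n'≠n} α_{n'} N(μₙ; μ_{n'}, Pₙ + P_{n'}) ]. -/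

import Mathlib

open MeasureTheory Real Matrix Finset
open scoped MatrixOrder

/-- The multivariate Gaussian density
`N(x; μ, Σ) = ((2π)^d det Σ)^{-1/2} exp(-(1/2)(x-μ)ᵀ Σ⁻¹ (x-μ))` on `ℝ^d`. -/
noncomputable def gaussPDF (d : ℕ) (μ : Fin d → ℝ) (S : Matrix (Fin d) (Fin d) ℝ)
    (x : Fin d → ℝ) : ℝ :=
  (Real.sqrt ((2 * Real.pi) ^ d * S.det))⁻¹ *
    Real.exp (-(1 / 2) * ((x - μ) ⬝ᵥ (S⁻¹ *ᵥ (x - μ))))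

/-- `J(αₙ) = ISD(p‖q)` regarded as a function of the single mixture weight `αₙ`
of the `n`-th component of `p`, all other weights held fixed. -/
noncomputable def isdWeightFun (d : ℕ) (I₁ I₂ : Type*)
    [Fintype I₁] [Fintype I₂] [DecidableEq I₁]
    (α : I₁ → ℝ) (β : I₂ → ℝ)
    (μ : I₁ → Fin d → ℝ) (m : I₂ → Fin d → ℝ)
    (P : I₁ → Matrix (Fin d) (Fin d) ℝ) (S : I₂ → Matrix (Fin d) (Fin d) ℝ)
    (n : I₁) (t : ℝ) : ℝ :=
  ∫ x : Fin d → ℝ,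
    ((∑ n', Function.update α n t n' * gaussPDF d (μ n') (P n') x)
      - ∑ m', β m' * gaussPDF d (m m') (S m') x) ^ 2




variable {d : ℕ}

lemma exp_dot_eq (x : Fin d → ℝ) : Real.exp (-(1/2) * (x ⬝ᵥ x))
    = ∏ i, Real.exp (-(1/2) * (x i)^2) := by
  rw [← Real.exp_sum]
  congr 1
  simp only [dotProduct, Finset.mul_sum]
  exact Finset.sum_congr rfl fun i _ => by ring

lemma sqrt_pow_nat {a : ℝ} (ha : 0 ≤ a) {k : ℕ} : Real.sqrt a ^ k = Real.sqrt (a ^ k) := by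
  induction k with
  | zero => simp
  | succ k ih => rw [pow_succ, pow_succ, Real.sqrt_mul (by positivity), ih]

lemma integrable_std_gauss :
    Integrable (fun x : Fin d → ℝ => Real.exp (-(1/2) * (x ⬝ᵥ x))) := by
  simp_rw [exp_dot_eq]
  exact Integrable.fintype_prod (f := fun _ t => Real.exp (-(1/2) * t^2))
    (fun i => by simpa using integrable_exp_neg_mul_sq (by norm_num : (0:ℝ) < 1/2))

lemma integral_std_gauss :
    ∫ x : Fin d → ℝ, Real.exp (-(1/2) * (x ⬝ᵥ x)) = Real.sqrt ((2 * Real.pi) ^ d) := by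
  simp_rw [exp_dot_eq]
  rw [MeasureTheory.volume_pi, MeasureTheory.integral_fintype_prod_eq_pow (ι := Fin d)
    (f := fun t : ℝ => Real.exp (-(1/2) * t^2))]
  have h1 : ∫ t : ℝ, Real.exp (-(1/2) * t^2) = Real.sqrt (2 * Real.pi) := by
    have := integral_gaussian (1/2)
    simp only [neg_mul] at this ⊢
    rw [this, div_div_eq_mul_div, div_one, Real.sqrt_mul Real.pi_nonneg,
      Real.sqrt_mul (by norm_num : (0:ℝ) ≤ 2)]
    ring
  rw [h1, Fintype.card_fin, sqrt_pow_nat (by positivity)]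



variable {d : ℕ}

section CoV

variable (R : Matrix (Fin d) (Fin d) ℝ)

noncomputable def covEquiv (hR : R.det ≠ 0) : (Fin d → ℝ) ≃ᵐ (Fin d → ℝ) :=
  ((R.toLinearEquiv' (R.invertibleOfIsUnitDet hR.isUnit)).toContinuousLinearEquiv.toHomeomorph).toMeasurableEquiv

lemma covEquiv_apply (hR : R.det ≠ 0) (x : Fin d → ℝ) : covEquiv R hR x = R *ᵥ x := rfl

lemma map_covEquiv (hR : R.det ≠ 0) :
    Measure.map (covEquiv R hR) (volume : Measure (Fin d → ℝ))
      = ENNReal.ofReal |R.det|⁻¹ • volume := by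
  have h1 : Measure.map (covEquiv R hR) (volume : Measure (Fin d → ℝ))
      = Measure.map (Matrix.toLin' R) volume := by
    congr 1
  rw [h1]
  have h2 := Measure.map_linearMap_addHaar_eq_smul_addHaar
    (μ := (volume : Measure (Fin d → ℝ))) (f := Matrix.toLin' R) ?_
  · rw [h2]
    congr 2
    rw [LinearMap.det_toLin', abs_inv]
  · rw [LinearMap.det_toLin']
    exact hR

lemma integral_comp_mulVec (hR : R.det ≠ 0) (g : (Fin d → ℝ) → ℝ) :
    ∫ x : Fin d → ℝ, g (R *ᵥ x) = |R.det|⁻¹ * ∫ y, g y := by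
  have := MeasureTheory.integral_map_equiv (μ := volume) (covEquiv R hR) g
  rw [map_covEquiv R hR] at this
  simp only [covEquiv_apply] at this
  rw [← this, integral_smul_measure, ENNReal.toReal_ofReal (by positivity), smul_eq_mul]

lemma integrable_comp_mulVec (hR : R.det ≠ 0) {g : (Fin d → ℝ) → ℝ} (hg : Integrable g) :
    Integrable (fun x : Fin d → ℝ => g (R *ᵥ x)) := by
  have := (MeasureTheory.integrable_map_equiv (μ := volume) (covEquiv R hR) g).symm
  rw [map_covEquiv R hR] at this
  have h2 : Integrable g (ENNReal.ofReal |R.det|⁻¹ • volume) := by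
    rw [integrable_smul_measure (by simp [hR]) (by simp)]
    exact hg
  exact this.mpr h2



variable {d : ℕ}

lemma dot_symm {C : Matrix (Fin d) (Fin d) ℝ} (hC : Cᵀ = C) (u v : Fin d → ℝ) :
    u ⬝ᵥ (C *ᵥ v) = v ⬝ᵥ (C *ᵥ u) := by
  rw [Matrix.dotProduct_mulVec, ← Matrix.mulVec_transpose, hC, dotProduct_comm]

lemma quad_eq_sqrt {M : Matrix (Fin d) (Fin d) ℝ} (hM : M.PosDef) (x : Fin d → ℝ) :
    (((CFC.sqrt M) *ᵥ x) ⬝ᵥ ((CFC.sqrt M) *ᵥ x)) = x ⬝ᵥ (M *ᵥ x) := by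
  set R := (CFC.sqrt M) with hRdef
  have hsym : Rᵀ = R := by
    rw [← conjTranspose_eq_transpose_of_trivial]
    exact (CFC.sqrt_nonneg M).posSemidef.isHermitian.eq
  calc (R *ᵥ x) ⬝ᵥ (R *ᵥ x)
      = ((R *ᵥ x) ᵥ* R) ⬝ᵥ x := Matrix.dotProduct_mulVec _ _ _
    _ = (Rᵀ *ᵥ (R *ᵥ x)) ⬝ᵥ x := by rw [Matrix.mulVec_transpose]
    _ = ((Rᵀ * R) *ᵥ x) ⬝ᵥ x := by rw [Matrix.mulVec_mulVec]
    _ = x ⬝ᵥ ((Rᵀ * R) *ᵥ x) := dotProduct_comm _ _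
    _ = x ⬝ᵥ (M *ᵥ x) := by rw [hsym, CFC.sqrt_mul_sqrt_self M hM.posSemidef.nonneg]

lemma det_sqrt_facts {M : Matrix (Fin d) (Fin d) ℝ} (hM : M.PosDef) :
    (CFC.sqrt M).det ≠ 0 ∧ |(CFC.sqrt M).det| = Real.sqrt M.det := by
  have h1 : (CFC.sqrt M).det * (CFC.sqrt M).det = M.det := by
    rw [← Matrix.det_mul, CFC.sqrt_mul_sqrt_self M hM.posSemidef.nonneg]
  have hd : (CFC.sqrt M).det ≠ 0 := by
    intro h; rw [h, mul_zero] at h1; exact hM.det_pos.ne h1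
  refine ⟨hd, ?_⟩
  rw [← h1, ← sq, Real.sqrt_sq_eq_abs]

lemma integrable_exp_quad {M : Matrix (Fin d) (Fin d) ℝ} (hM : M.PosDef) (c : Fin d → ℝ) :
    Integrable (fun x : Fin d → ℝ => Real.exp (-(1/2) * ((x - c) ⬝ᵥ (M *ᵥ (x - c))))) := by
  have h0 : Integrable (fun x : Fin d → ℝ => Real.exp (-(1/2) * (x ⬝ᵥ (M *ᵥ x)))) := by
    have := integrable_comp_mulVec (CFC.sqrt M) (det_sqrt_facts hM).1
      (g := fun y : Fin d → ℝ => Real.exp (-(1/2) * (y ⬝ᵥ y))) integrable_std_gauss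
    have key : (fun x : Fin d → ℝ => Real.exp (-(1/2) * (((CFC.sqrt M) *ᵥ x) ⬝ᵥ ((CFC.sqrt M) *ᵥ x))))
        = fun x : Fin d → ℝ => Real.exp (-(1/2) * (x ⬝ᵥ (M *ᵥ x))) :=
      funext fun x => by rw [quad_eq_sqrt hM]
    rw [← key]
    exact this
  exact h0.comp_sub_right c

lemma integral_exp_quad {M : Matrix (Fin d) (Fin d) ℝ} (hM : M.PosDef) (c : Fin d → ℝ) :
    ∫ x : Fin d → ℝ, Real.exp (-(1/2) * ((x - c) ⬝ᵥ (M *ᵥ (x - c))))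
      = Real.sqrt ((2 * Real.pi) ^ d) / Real.sqrt M.det := by
  have h1 : ∫ x : Fin d → ℝ, Real.exp (-(1/2) * ((x - c) ⬝ᵥ (M *ᵥ (x - c))))
      = ∫ x : Fin d → ℝ, Real.exp (-(1/2) * (x ⬝ᵥ (M *ᵥ x))) := by
    exact MeasureTheory.integral_sub_right_eq_self (μ := volume)
      (fun x : Fin d → ℝ => Real.exp (-(1/2) * (x ⬝ᵥ (M *ᵥ x)))) c
  rw [h1]
  have h2 : ∀ x : Fin d → ℝ, Real.exp (-(1/2) * (((CFC.sqrt M) *ᵥ x) ⬝ᵥ ((CFC.sqrt M) *ᵥ x)))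
      = Real.exp (-(1/2) * (x ⬝ᵥ (M *ᵥ x))) := fun x => by rw [quad_eq_sqrt hM]
  have h3 := integral_comp_mulVec (CFC.sqrt M) (det_sqrt_facts hM).1
    (g := fun y : Fin d → ℝ => Real.exp (-(1/2) * (y ⬝ᵥ y)))
  simp_rw [h2] at h3
  rw [h3, integral_std_gauss, (det_sqrt_facts hM).2]
  rw [inv_mul_eq_div]

variable {d : ℕ}

section Algebra

variable {A B : Matrix (Fin d) (Fin d) ℝ}

lemma Matrix.PosDef.du (hA : A.PosDef) : IsUnit A.det := hA.det_pos.ne'.isUnit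

lemma M_eq (hA : A.PosDef) (hB : B.PosDef) : A⁻¹ + B⁻¹ = A⁻¹ * (A + B) * B⁻¹ := by
  rw [Matrix.mul_add, Matrix.add_mul, Matrix.nonsing_inv_mul A hA.du, Matrix.one_mul,
    Matrix.mul_assoc, Matrix.mul_nonsing_inv B hB.du, Matrix.mul_one, add_comm]

lemma M_eq' (hA : A.PosDef) (hB : B.PosDef) : A⁻¹ + B⁻¹ = B⁻¹ * (A + B) * A⁻¹ := by
  rw [Matrix.mul_add, Matrix.add_mul, Matrix.nonsing_inv_mul B hB.du, Matrix.one_mul,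
    Matrix.mul_assoc, Matrix.mul_nonsing_inv A hA.du, Matrix.mul_one, add_comm]

lemma M_posDef (hA : A.PosDef) (hB : B.PosDef) : (A⁻¹ + B⁻¹).PosDef :=
  hA.inv.add hB.inv

lemma Minv_eq (hA : A.PosDef) (hB : B.PosDef) :
    (A⁻¹ + B⁻¹)⁻¹ = B * (A + B)⁻¹ * A := by
  rw [M_eq hA hB, Matrix.mul_inv_rev, Matrix.mul_inv_rev,
    Matrix.nonsing_inv_nonsing_inv A hA.du,
    Matrix.nonsing_inv_nonsing_inv B hB.du, Matrix.mul_assoc]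

lemma Minv_eq' (hA : A.PosDef) (hB : B.PosDef) :
    (A⁻¹ + B⁻¹)⁻¹ = A * (A + B)⁻¹ * B := by
  rw [M_eq' hA hB, Matrix.mul_inv_rev, Matrix.mul_inv_rev,
    Matrix.nonsing_inv_nonsing_inv A hA.du,
    Matrix.nonsing_inv_nonsing_inv B hB.du, Matrix.mul_assoc]

lemma id3 (hA : A.PosDef) (hB : B.PosDef) :
    A⁻¹ * (A⁻¹ + B⁻¹)⁻¹ * B⁻¹ = (A + B)⁻¹ := by
  rw [Minv_eq' hA hB, ← Matrix.mul_assoc, ← Matrix.mul_assoc,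
    Matrix.nonsing_inv_mul A hA.du, Matrix.one_mul, Matrix.mul_assoc,
    Matrix.mul_nonsing_inv B hB.du, Matrix.mul_one]

lemma id4 (hA : A.PosDef) (hB : B.PosDef) :
    B⁻¹ * (A⁻¹ + B⁻¹)⁻¹ * A⁻¹ = (A + B)⁻¹ := by
  rw [Minv_eq hA hB, ← Matrix.mul_assoc, ← Matrix.mul_assoc,
    Matrix.nonsing_inv_mul B hB.du, Matrix.one_mul, Matrix.mul_assoc,
    Matrix.mul_nonsing_inv A hA.du, Matrix.mul_one]

lemma id1 (hA : A.PosDef) (hB : B.PosDef) :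
    A⁻¹ * (A⁻¹ + B⁻¹)⁻¹ * A⁻¹ = A⁻¹ - (A + B)⁻¹ := by
  have hAB : (A + B).PosDef := hA.add hB
  rw [Minv_eq' hA hB, ← Matrix.mul_assoc, ← Matrix.mul_assoc,
    Matrix.nonsing_inv_mul A hA.du, Matrix.one_mul]
  -- goal: (A+B)⁻¹ * B * A⁻¹ = A⁻¹ - (A+B)⁻¹
  have h : (A + B)⁻¹ * B = 1 - (A + B)⁻¹ * A := by
    have h2 := Matrix.nonsing_inv_mul (A + B) hAB.du
    rw [Matrix.mul_add] at h2
    rw [← h2]; abel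
  rw [Matrix.mul_assoc, ← Matrix.mul_assoc, h, Matrix.sub_mul, Matrix.one_mul,
    Matrix.mul_assoc, Matrix.mul_nonsing_inv A hA.du, Matrix.mul_one]

lemma id2 (hA : A.PosDef) (hB : B.PosDef) :
    B⁻¹ * (A⁻¹ + B⁻¹)⁻¹ * B⁻¹ = B⁻¹ - (A + B)⁻¹ := by
  have hAB : (A + B).PosDef := hA.add hB
  rw [Minv_eq hA hB, ← Matrix.mul_assoc, ← Matrix.mul_assoc,
    Matrix.nonsing_inv_mul B hB.du, Matrix.one_mul]
  have h : (A + B)⁻¹ * A = 1 - (A + B)⁻¹ * B := by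
    have h2 := Matrix.nonsing_inv_mul (A + B) hAB.du
    rw [Matrix.mul_add] at h2
    rw [← h2]; abel
  rw [Matrix.mul_assoc, ← Matrix.mul_assoc, h, Matrix.sub_mul, Matrix.one_mul,
    Matrix.mul_assoc, Matrix.mul_nonsing_inv B hB.du, Matrix.mul_one]

lemma det_M (hA : A.PosDef) (hB : B.PosDef) :
    (A⁻¹ + B⁻¹).det = (A + B).det / (A.det * B.det) := by
  rw [M_eq hA hB, Matrix.det_mul, Matrix.det_mul, Matrix.det_nonsing_inv,
    Matrix.det_nonsing_inv, Ring.inverse_eq_inv']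
  field_simp

end Algebra

variable {d : ℕ}

lemma Matrix.PosDef.transpose_eq {M : Matrix (Fin d) (Fin d) ℝ} (hM : M.PosDef) : Mᵀ = M := by
  rw [← conjTranspose_eq_transpose_of_trivial]; exact hM.isHermitian.eq

lemma dot_mulVec_left {C : Matrix (Fin d) (Fin d) ℝ} (hC : Cᵀ = C) (u z : Fin d → ℝ) :
    (C *ᵥ u) ⬝ᵥ z = u ⬝ᵥ (C *ᵥ z) := by
  rw [dotProduct_comm, dot_symm hC]

lemma quad_expand {C : Matrix (Fin d) (Fin d) ℝ} (hC : Cᵀ = C) (u v : Fin d → ℝ) :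
    (u - v) ⬝ᵥ (C *ᵥ (u - v))
      = u ⬝ᵥ (C *ᵥ u) - 2 * (u ⬝ᵥ (C *ᵥ v)) + v ⬝ᵥ (C *ᵥ v) := by
  rw [Matrix.mulVec_sub, sub_dotProduct, dotProduct_sub, dotProduct_sub,
    dot_symm hC v u]
  ring

lemma quad_identity {A B : Matrix (Fin d) (Fin d) ℝ} (hA : A.PosDef) (hB : B.PosDef)
    (μ ν x : Fin d → ℝ) :
    (x - μ) ⬝ᵥ (A⁻¹ *ᵥ (x - μ)) + (x - ν) ⬝ᵥ (B⁻¹ *ᵥ (x - ν))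
      = (x - (A⁻¹ + B⁻¹)⁻¹ *ᵥ (A⁻¹ *ᵥ μ + B⁻¹ *ᵥ ν)) ⬝ᵥ
          ((A⁻¹ + B⁻¹) *ᵥ (x - (A⁻¹ + B⁻¹)⁻¹ *ᵥ (A⁻¹ *ᵥ μ + B⁻¹ *ᵥ ν)))
        + (μ - ν) ⬝ᵥ ((A + B)⁻¹ *ᵥ (μ - ν)) := by
  have hAB : (A + B).PosDef := hA.add hB
  have hM : (A⁻¹ + B⁻¹).PosDef := M_posDef hA hB
  have hA' : (A⁻¹)ᵀ = A⁻¹ := hA.inv.transpose_eq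
  have hB' : (B⁻¹)ᵀ = B⁻¹ := hB.inv.transpose_eq
  have hMt : (A⁻¹ + B⁻¹)ᵀ = A⁻¹ + B⁻¹ := hM.transpose_eq
  have hMinvt : ((A⁻¹ + B⁻¹)⁻¹)ᵀ = (A⁻¹ + B⁻¹)⁻¹ := hM.inv.transpose_eq
  have hK : ((A + B)⁻¹)ᵀ = (A + B)⁻¹ := hAB.inv.transpose_eq
  set w : Fin d → ℝ := A⁻¹ *ᵥ μ + B⁻¹ *ᵥ ν with hw
  set c : Fin d → ℝ := (A⁻¹ + B⁻¹)⁻¹ *ᵥ w with hc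
  have hMc : (A⁻¹ + B⁻¹) *ᵥ c = w := by
    rw [hc, Matrix.mulVec_mulVec, Matrix.mul_nonsing_inv _ hM.du, Matrix.one_mulVec]
  rw [quad_expand hA', quad_expand hB', quad_expand hMt, quad_expand hK]
  have e1 : x ⬝ᵥ ((A⁻¹ + B⁻¹) *ᵥ x) = x ⬝ᵥ (A⁻¹ *ᵥ x) + x ⬝ᵥ (B⁻¹ *ᵥ x) := by
    rw [Matrix.add_mulVec, dotProduct_add]
  have e2 : x ⬝ᵥ ((A⁻¹ + B⁻¹) *ᵥ c) = x ⬝ᵥ (A⁻¹ *ᵥ μ) + x ⬝ᵥ (B⁻¹ *ᵥ ν) := by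
    rw [hMc, hw, dotProduct_add]
  have e3 : c ⬝ᵥ ((A⁻¹ + B⁻¹) *ᵥ c)
      = (μ ⬝ᵥ (A⁻¹ *ᵥ μ) - μ ⬝ᵥ ((A + B)⁻¹ *ᵥ μ)) + μ ⬝ᵥ ((A + B)⁻¹ *ᵥ ν)
        + (ν ⬝ᵥ ((A + B)⁻¹ *ᵥ μ)
          + (ν ⬝ᵥ (B⁻¹ *ᵥ ν) - ν ⬝ᵥ ((A + B)⁻¹ *ᵥ ν))) := by
    rw [hMc, hc, dot_mulVec_left hMinvt, hw, Matrix.mulVec_add, add_dotProduct,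
      dotProduct_add, dotProduct_add,
      dot_mulVec_left hA' μ, dot_mulVec_left hB' ν, dot_mulVec_left hA' μ,
      dot_mulVec_left hB' ν]
    simp only [Matrix.mulVec_mulVec]
    rw [← Matrix.mul_assoc, ← Matrix.mul_assoc, ← Matrix.mul_assoc, ← Matrix.mul_assoc,
      id1 hA hB, id2 hA hB, id3 hA hB, id4 hA hB, Matrix.sub_mulVec, Matrix.sub_mulVec,
      dotProduct_sub, dotProduct_sub]
  have e4 : ν ⬝ᵥ ((A + B)⁻¹ *ᵥ μ) = μ ⬝ᵥ ((A + B)⁻¹ *ᵥ ν) := dot_symm hK ν μ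
  rw [e1, e2, e3, e4]
  ring

variable {d : ℕ}

lemma gaussPDF_pos {μ : Fin d → ℝ} {S : Matrix (Fin d) (Fin d) ℝ} (hS : S.PosDef)
    (x : Fin d → ℝ) : 0 < gaussPDF d μ S x := by
  have h : 0 < (2 * Real.pi) ^ d * S.det := by
    have := hS.det_pos; positivity
  unfold gaussPDF
  positivity

lemma gaussPDF_mul_eq {A B : Matrix (Fin d) (Fin d) ℝ} (hA : A.PosDef) (hB : B.PosDef)
    (μ ν : Fin d → ℝ) :
    (fun x => gaussPDF d μ A x * gaussPDF d ν B x)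
      = fun x =>
        ((Real.sqrt ((2 * Real.pi) ^ d * A.det))⁻¹ * (Real.sqrt ((2 * Real.pi) ^ d * B.det))⁻¹ *
          Real.exp (-(1 / 2) * ((μ - ν) ⬝ᵥ ((A + B)⁻¹ *ᵥ (μ - ν))))) *
        Real.exp (-(1 / 2) *
          ((x - (A⁻¹ + B⁻¹)⁻¹ *ᵥ (A⁻¹ *ᵥ μ + B⁻¹ *ᵥ ν)) ⬝ᵥ
            ((A⁻¹ + B⁻¹) *ᵥ (x - (A⁻¹ + B⁻¹)⁻¹ *ᵥ (A⁻¹ *ᵥ μ + B⁻¹ *ᵥ ν))))) := by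
  funext x
  unfold gaussPDF
  rw [mul_mul_mul_comm, ← Real.exp_add]
  have : -(1 / 2) * ((x - μ) ⬝ᵥ (A⁻¹ *ᵥ (x - μ))) + -(1 / 2) * ((x - ν) ⬝ᵥ (B⁻¹ *ᵥ (x - ν)))
      = -(1 / 2) * ((x - μ) ⬝ᵥ (A⁻¹ *ᵥ (x - μ)) + (x - ν) ⬝ᵥ (B⁻¹ *ᵥ (x - ν))) := by ring
  rw [this, quad_identity hA hB μ ν x, mul_add, Real.exp_add]
  ring

lemma integrable_gaussPDF_mul {A B : Matrix (Fin d) (Fin d) ℝ} (hA : A.PosDef) (hB : B.PosDef)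
    (μ ν : Fin d → ℝ) :
    Integrable (fun x : Fin d → ℝ => gaussPDF d μ A x * gaussPDF d ν B x) := by
  rw [gaussPDF_mul_eq hA hB]
  exact (integrable_exp_quad (M_posDef hA hB) _).const_mul _

lemma sqrt_const_arith {a dA dB dAB : ℝ} (ha : 0 < a) (hdA : 0 < dA) (hdB : 0 < dB)
    (hdAB : 0 < dAB) :
    (Real.sqrt (a * dA))⁻¹ * (Real.sqrt (a * dB))⁻¹ *
      (Real.sqrt a / Real.sqrt (dAB / (dA * dB))) = (Real.sqrt (a * dAB))⁻¹ := by
  rw [Real.sqrt_mul ha.le, Real.sqrt_mul ha.le, Real.sqrt_div hdAB.le, Real.sqrt_mul hdA.le]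
  have h1 : 0 < Real.sqrt a := Real.sqrt_pos.mpr ha
  have h2 : 0 < Real.sqrt dA := Real.sqrt_pos.mpr hdA
  have h3 : 0 < Real.sqrt dB := Real.sqrt_pos.mpr hdB
  have h4 : 0 < Real.sqrt dAB := Real.sqrt_pos.mpr hdAB
  field_simp
  ring
  rw [Real.sqrt_mul ha.le]

lemma integral_gaussPDF_mul {A B : Matrix (Fin d) (Fin d) ℝ} (hA : A.PosDef) (hB : B.PosDef)
    (μ ν : Fin d → ℝ) :
    ∫ x : Fin d → ℝ, gaussPDF d μ A x * gaussPDF d ν B x = gaussPDF d ν (A + B) μ := by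
  rw [gaussPDF_mul_eq hA hB, MeasureTheory.integral_const_mul,
    integral_exp_quad (M_posDef hA hB), det_M hA hB]
  unfold gaussPDF
  have hc := sqrt_const_arith (by positivity : (0:ℝ) < (2 * Real.pi) ^ d)
    hA.det_pos hB.det_pos (hA.add hB).det_pos
  linear_combination Real.exp (-(1 / 2) * ((μ - ν) ⬝ᵥ ((A + B)⁻¹ *ᵥ (μ - ν)))) * hc

variable {d : ℕ}

section Mix

variable {ι κ : Type*} (s : Finset ι) (t : Finset κ) (c : ι → ℝ) (e : κ → ℝ)
  (mi : ι → Fin d → ℝ) (mj : κ → Fin d → ℝ)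
  (Ci : ι → Matrix (Fin d) (Fin d) ℝ) (Cj : κ → Matrix (Fin d) (Fin d) ℝ)

lemma mix_mul_eq :
    (fun x : Fin d → ℝ => (∑ i ∈ s, c i * gaussPDF d (mi i) (Ci i) x) *
        (∑ j ∈ t, e j * gaussPDF d (mj j) (Cj j) x))
      = fun x => ∑ i ∈ s, ∑ j ∈ t,
          (c i * e j) * (gaussPDF d (mi i) (Ci i) x * gaussPDF d (mj j) (Cj j) x) := by
  funext x
  rw [Finset.sum_mul_sum]
  exact Finset.sum_congr rfl fun i _ => Finset.sum_congr rfl fun j _ => by ring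

lemma integrable_mix_mul (hCi : ∀ i, (Ci i).PosDef) (hCj : ∀ j, (Cj j).PosDef) :
    Integrable (fun x : Fin d → ℝ => (∑ i ∈ s, c i * gaussPDF d (mi i) (Ci i) x) *
        (∑ j ∈ t, e j * gaussPDF d (mj j) (Cj j) x)) := by
  rw [mix_mul_eq]
  exact integrable_finset_sum _ fun i _ => integrable_finset_sum _ fun j _ =>
    (integrable_gaussPDF_mul (hCi i) (hCj j) _ _).const_mul _

lemma integral_mix_mul (hCi : ∀ i, (Ci i).PosDef) (hCj : ∀ j, (Cj j).PosDef) :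
    ∫ x : Fin d → ℝ, (∑ i ∈ s, c i * gaussPDF d (mi i) (Ci i) x) *
        (∑ j ∈ t, e j * gaussPDF d (mj j) (Cj j) x)
      = ∑ i ∈ s, ∑ j ∈ t, (c i * e j) * gaussPDF d (mj j) (Ci i + Cj j) (mi i) := by
  rw [mix_mul_eq]
  rw [MeasureTheory.integral_finset_sum _ fun i _ => integrable_finset_sum _ fun j _ =>
    (integrable_gaussPDF_mul (hCi i) (hCj j) _ _).const_mul _]
  refine Finset.sum_congr rfl fun i _ => ?_
  rw [MeasureTheory.integral_finset_sum _ fun j _ =>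
    (integrable_gaussPDF_mul (hCi i) (hCj j) _ _).const_mul _]
  refine Finset.sum_congr rfl fun j _ => ?_
  rw [MeasureTheory.integral_const_mul, integral_gaussPDF_mul (hCi i) (hCj j)]

end Mix

/-- (Stationary point characterization in the coordinate-wise fit) `J'(αₙ) = 0`
holds if and only if
`αₙ = (2π)^{d/2} (det(2Pₙ))^{1/2} [ Σₘ βₘ N(μₙ; mₘ, Pₙ+Sₘ) − Σ_{n'≠n} α_{n'} N(μₙ; μ_{n'}, Pₙ+P_{n'}) ]`. -/
theorem isd_single_weight_stationary_iff (d : ℕ) (I₁ I₂ : Type*)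
    [Fintype I₁] [Fintype I₂] [DecidableEq I₁]
    (α : I₁ → ℝ) (β : I₂ → ℝ)
    (μ : I₁ → Fin d → ℝ) (m : I₂ → Fin d → ℝ)
    (P : I₁ → Matrix (Fin d) (Fin d) ℝ) (S : I₂ → Matrix (Fin d) (Fin d) ℝ)
    (hP : ∀ n, (P n).PosDef) (hS : ∀ m', (S m').PosDef) (n : I₁) (a : ℝ) :
    deriv (isdWeightFun d I₁ I₂ α β μ m P S n) a = 0
      ↔ a = Real.sqrt ((2 * Real.pi) ^ d * ((2 : ℝ) • P n).det) *
          ((∑ m', β m' * gaussPDF d (m m') (P n + S m') (μ n))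
            - ∑ n' ∈ Finset.univ.erase n, α n' * gaussPDF d (μ n') (P n + P n') (μ n)) := by
  classical
  set g : (Fin d → ℝ) → ℝ := gaussPDF d (μ n) (P n) with hg
  set s1 : (Fin d → ℝ) → ℝ := fun x => ∑ n' ∈ Finset.univ.erase n,
    α n' * gaussPDF d (μ n') (P n') x with hs1
  set s2 : (Fin d → ℝ) → ℝ := fun x => ∑ m', β m' * gaussPDF d (m m') (S m') x with hs2
  -- rewrite g as a mix over a singleton
  have hg_mix : ∀ x, g x = ∑ i ∈ ({n} : Finset I₁), (fun _ => (1:ℝ)) i *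
      gaussPDF d (μ i) (P i) x := by
    intro x; rw [Finset.sum_singleton, one_mul]
  -- pointwise decomposition of the integrand
  have hpt : ∀ t (x : Fin d → ℝ),
      ((∑ n', Function.update α n t n' * gaussPDF d (μ n') (P n') x)
        - ∑ m', β m' * gaussPDF d (m m') (S m') x)
      = t * g x + (s1 x - s2 x) := by
    intro t x
    have hsplit : (∑ n', Function.update α n t n' * gaussPDF d (μ n') (P n') x)
        = Function.update α n t n * gaussPDF d (μ n) (P n) x
          + ∑ n' ∈ Finset.univ.erase n,
              Function.update α n t n' * gaussPDF d (μ n') (P n') x :=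
      (Finset.add_sum_erase _ _ (Finset.mem_univ n)).symm
    rw [hsplit, Function.update_self]
    have : ∑ n' ∈ Finset.univ.erase n, Function.update α n t n' * gaussPDF d (μ n') (P n') x
        = s1 x := by
      refine Finset.sum_congr rfl fun i hi => ?_
      rw [Function.update_of_ne (Finset.ne_of_mem_erase hi)]
    rw [this, hg]
    ring
  -- integrability facts
  have hgg : Integrable (fun x : Fin d → ℝ => g x * g x) :=
    integrable_gaussPDF_mul (hP n) (hP n) _ _
  have hgs1 : Integrable (fun x : Fin d → ℝ => g x * s1 x) := by
    simp_rw [hg_mix]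
    exact integrable_mix_mul _ _ _ _ _ _ _ _ (fun _ => hP _) (fun _ => hP _)
  have hgs2 : Integrable (fun x : Fin d → ℝ => g x * s2 x) := by
    simp_rw [hg_mix]
    exact integrable_mix_mul _ _ _ _ _ _ _ _ (fun _ => hP _) (fun _ => hS _)
  have hs1s1 : Integrable (fun x : Fin d → ℝ => s1 x * s1 x) :=
    integrable_mix_mul _ _ _ _ _ _ _ _ (fun _ => hP _) (fun _ => hP _)
  have hs1s2 : Integrable (fun x : Fin d → ℝ => s1 x * s2 x) :=
    integrable_mix_mul _ _ _ _ _ _ _ _ (fun _ => hP _) (fun _ => hS _)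
  have hs2s2 : Integrable (fun x : Fin d → ℝ => s2 x * s2 x) :=
    integrable_mix_mul _ _ _ _ _ _ _ _ (fun _ => hS _) (fun _ => hS _)
  have hgh : Integrable (fun x : Fin d → ℝ => g x * (s1 x - s2 x)) := by
    have : (fun x : Fin d → ℝ => g x * (s1 x - s2 x))
        = fun x => g x * s1 x - g x * s2 x := funext fun x => by ring
    rw [this]; exact hgs1.sub hgs2
  have hhh : Integrable (fun x : Fin d → ℝ => (s1 x - s2 x) * (s1 x - s2 x)) := by
    have : (fun x : Fin d → ℝ => (s1 x - s2 x) * (s1 x - s2 x))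
        = fun x => s1 x * s1 x - s1 x * s2 x - (s1 x * s2 x - s2 x * s2 x) :=
      funext fun x => by ring
    rw [this]; exact (hs1s1.sub hs1s2).sub (hs1s2.sub hs2s2)
  set Igg : ℝ := ∫ x : Fin d → ℝ, g x * g x with hIgg
  set Igh : ℝ := ∫ x : Fin d → ℝ, g x * (s1 x - s2 x) with hIgh
  set Ihh : ℝ := ∫ x : Fin d → ℝ, (s1 x - s2 x) * (s1 x - s2 x) with hIhh
  -- J is a quadratic polynomial
  have hJ : isdWeightFun d I₁ I₂ α β μ m P S n
      = fun t => Igg * t^2 + (2 * Igh) * t + Ihh := by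
    funext t
    unfold isdWeightFun
    have h1 : ∀ x : Fin d → ℝ,
        ((∑ n', Function.update α n t n' * gaussPDF d (μ n') (P n') x)
          - ∑ m', β m' * gaussPDF d (m m') (S m') x) ^ 2
        = t^2 * (g x * g x) + (2*t) * (g x * (s1 x - s2 x))
            + (s1 x - s2 x) * (s1 x - s2 x) := by
      intro x; rw [hpt t x]; ring
    simp_rw [h1]
    have int1 : Integrable (fun x : Fin d → ℝ => t ^ 2 * (g x * g x)) volume :=
      hgg.const_mul _
    have int2 : Integrable (fun x : Fin d → ℝ => (2 * t) * (g x * (s1 x - s2 x))) volume :=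
      hgh.const_mul _
    have e1 := MeasureTheory.integral_add (μ := volume)
      (f := fun x : Fin d → ℝ => t ^ 2 * (g x * g x) + (2 * t) * (g x * (s1 x - s2 x)))
      (g := fun x : Fin d → ℝ => (s1 x - s2 x) * (s1 x - s2 x)) (int1.add int2) hhh
    have e2 := MeasureTheory.integral_add (μ := volume)
      (f := fun x : Fin d → ℝ => t ^ 2 * (g x * g x))
      (g := fun x : Fin d → ℝ => (2 * t) * (g x * (s1 x - s2 x))) int1 int2
    rw [e1, e2, MeasureTheory.integral_const_mul, MeasureTheory.integral_const_mul]
    ring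
  rw [hJ]
  -- the derivative
  have hderiv : HasDerivAt (fun t : ℝ => Igg * t^2 + (2 * Igh) * t + Ihh)
      (Igg * (2*a) + 2 * Igh) a := by
    have h1 : HasDerivAt (fun t : ℝ => t^2) (2*a) a := by
      simpa using hasDerivAt_pow 2 a
    have h2 : HasDerivAt (fun t : ℝ => (2 * Igh) * t) (2 * Igh) a := by
      simpa using (hasDerivAt_id a).const_mul (2 * Igh)
    exact ((h1.const_mul Igg).add h2).add_const Ihh
  rw [hderiv.deriv]
  -- compute Igg
  have hIgg_val : Igg = (Real.sqrt ((2 * Real.pi) ^ d * (P n + P n).det))⁻¹ := by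
    rw [hIgg, hg, integral_gaussPDF_mul (hP n) (hP n)]
    unfold gaussPDF
    rw [sub_self, zero_dotProduct, mul_zero, Real.exp_zero, mul_one]
  have hdet_pos : 0 < (2 * Real.pi) ^ d * (P n + P n).det := by
    have := ((hP n).add (hP n)).det_pos; positivity
  have hIgg_pos : 0 < Igg := by rw [hIgg_val]; positivity
  -- compute Igh
  have hIgh_val : Igh = (∑ n' ∈ Finset.univ.erase n,
        α n' * gaussPDF d (μ n') (P n + P n') (μ n))
      - ∑ m', β m' * gaussPDF d (m m') (P n + S m') (μ n) := by
    rw [hIgh]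
    have : (fun x : Fin d → ℝ => g x * (s1 x - s2 x))
        = fun x => g x * s1 x - g x * s2 x := funext fun x => by ring
    rw [this, MeasureTheory.integral_sub hgs1 hgs2]
    congr 1
    · have : (fun x : Fin d → ℝ => g x * s1 x) = fun x =>
          (∑ i ∈ ({n} : Finset I₁), (fun _ => (1:ℝ)) i * gaussPDF d (μ i) (P i) x) *
          (∑ n' ∈ Finset.univ.erase n, α n' * gaussPDF d (μ n') (P n') x) :=
        funext fun x => by rw [← hg_mix x]
      rw [this, integral_mix_mul _ _ _ _ _ _ _ _ (fun _ => hP _) (fun _ => hP _),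
        Finset.sum_singleton]
      exact Finset.sum_congr rfl fun i _ => by rw [one_mul]
    · have : (fun x : Fin d → ℝ => g x * s2 x) = fun x =>
          (∑ i ∈ ({n} : Finset I₁), (fun _ => (1:ℝ)) i * gaussPDF d (μ i) (P i) x) *
          (∑ m', β m' * gaussPDF d (m m') (S m') x) :=
        funext fun x => by rw [← hg_mix x]
      rw [this, integral_mix_mul _ _ _ _ _ _ _ _ (fun _ => hP _) (fun _ => hS _),
        Finset.sum_singleton]
      exact Finset.sum_congr rfl fun i _ => by rw [one_mul]
  -- final equivalence
  have htwo : ((2 : ℝ) • P n) = P n + P n := two_smul ℝ (P n)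
  rw [htwo]
  have hsqrt : Real.sqrt ((2 * Real.pi) ^ d * (P n + P n).det) = Igg⁻¹ := by
    rw [hIgg_val, inv_inv]
  rw [hsqrt]
  constructor
  · intro h
    have : a = Igg⁻¹ * (-Igh) := by
      field_simp at h ⊢
      linarith
    rw [this, hIgh_val]
    ring
  · intro h
    rw [h, hIgh_val]
    field_simp
    ring
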